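/- Pure types: call a unitary type A pure when ⟦A⟧ contains only pure values (equivalently ⟦♭A⟧ = ⟦A⟧). Then for all unitary types A and B: (1) the types 𝕌, ♭A and A→B are pure; (2) if A and B are pure, then so are A+B and A×B; (3) ♯A and A⇒B are not pure unless they are empty (i.e., if ⟦♯A⟧ ≠ ∅ then ♯A is not pure, and if ⟦A⇒B⟧ ≠ ∅ then A⇒B is not pure). -/
import Mathlib


namespace LinAlg

/-! ### Syntax: pure values, pure terms, term distributions -/

mutual
inductive Val : Type where
  | var : ℕ → Val
  | lam : ℕ → Distr → Val
  | star : Val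
  | pair : Val → Val → Val
  | inl : Val → Val
  | inr : Val → Val
inductive Term : Type where
  | val : Val → Term
  | app : Term → Term → Term
  | seq : Term → Distr → Term
  | letp : ℕ → ℕ → Term → Distr → Term
  | matc : Term → ℕ → Distr → ℕ → Distr → Term
inductive Distr : Type where
  | zero : Distr
  | single : Term → Distr
  | add : Distr → Distr → Distr
  | smul : ℂ → Distr → Distr
end

noncomputable instance : DecidableEq Val := fun _ _ => Classical.dec _
noncomputable instance : DecidableEq Term := fun _ _ => Classical.dec _
noncomputable instance : DecidableEq Distr := fun _ _ => Classical.dec _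

/-! ### The shallow congruence ≡ on term distributions -/

inductive Cong : Distr → Distr → Prop where
  | addZero (d : Distr) : Cong (d.add .zero) d
  | oneSmul (d : Distr) : Cong (Distr.smul 1 d) d
  | smulSmul (a b : ℂ) (d : Distr) : Cong (Distr.smul a (Distr.smul b d)) (Distr.smul (a * b) d)
  | addComm (d₁ d₂ : Distr) : Cong (d₁.add d₂) (d₂.add d₁)
  | addAssoc (d₁ d₂ d₃ : Distr) : Cong ((d₁.add d₂).add d₃) (d₁.add (d₂.add d₃))
  | smulDistrib (a b : ℂ) (d : Distr) : Cong (Distr.smul (a + b) d) ((Distr.smul a d).add (Distr.smul b d))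
  | smulAdd (a : ℂ) (d₁ d₂ : Distr) : Cong (Distr.smul a (d₁.add d₂)) ((Distr.smul a d₁).add (Distr.smul a d₂))
  | refl (d : Distr) : Cong d d
  | symm {d₁ d₂ : Distr} : Cong d₁ d₂ → Cong d₂ d₁
  | trans {d₁ d₂ d₃ : Distr} : Cong d₁ d₂ → Cong d₂ d₃ → Cong d₁ d₃
  | addCongr {d₁ d₁' d₂ d₂' : Distr} : Cong d₁ d₁' → Cong d₂ d₂' → Cong (d₁.add d₂) (d₁'.add d₂')
  | smulCongr (a : ℂ) {d d' : Distr} : Cong d d' → Cong (Distr.smul a d) (Distr.smul a d')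

/-! ### Free variables -/

mutual
def fvV : Val → Finset ℕ
  | .var y => {y}
  | .lam y b => fvD b \ {y}
  | .star => ∅
  | .pair v₁ v₂ => fvV v₁ ∪ fvV v₂
  | .inl v => fvV v
  | .inr v => fvV v
def fvT : Term → Finset ℕ
  | .val v => fvV v
  | .app s t => fvT s ∪ fvT t
  | .seq t s => fvT t ∪ fvD s
  | .letp y z t s => fvT t ∪ (fvD s \ {y, z})
  | .matc t y s₁ z s₂ => fvT t ∪ (fvD s₁ \ {y}) ∪ (fvD s₂ \ {z})
def fvD : Distr → Finset ℕ
  | .zero => ∅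
  | .single t => fvT t
  | .add d₁ d₂ => fvD d₁ ∪ fvD d₂
  | .smul _ d => fvD d
end

/-! ### Pure substitution -/

mutual
def substV (x : ℕ) (w : Val) : Val → Val
  | .var y => if y = x then w else .var y
  | .lam y b => if y = x then .lam y b else .lam y (substD x w b)
  | .star => .star
  | .pair v₁ v₂ => .pair (substV x w v₁) (substV x w v₂)
  | .inl v => .inl (substV x w v)
  | .inr v => .inr (substV x w v)
def substT (x : ℕ) (w : Val) : Term → Term
  | .val v => .val (substV x w v)
  | .app s t => .app (substT x w s) (substT x w t)
  | .seq t s => .seq (substT x w t) (substD x w s)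
  | .letp y z t s =>
      .letp y z (substT x w t) (if y = x ∨ z = x then s else substD x w s)
  | .matc t y s₁ z s₂ =>
      .matc (substT x w t) y (if y = x then s₁ else substD x w s₁)
        z (if z = x then s₂ else substD x w s₂)
def substD (x : ℕ) (w : Val) : Distr → Distr
  | .zero => .zero
  | .single t => .single (substT x w t)
  | .add d₁ d₂ => .add (substD x w d₁) (substD x w d₂)
  | .smul a d => .smul a (substD x w d)
end

/-! ### Linear extensions of the syntactic constructs -/

def appTD (s : Term) : Distr → Distr
  | .zero => .zero
  | .single t => .single (.app s t)
  | .add d₁ d₂ => .add (appTD s d₁) (appTD s d₂)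
  | .smul a d => .smul a (appTD s d)

def appDV : Distr → Val → Distr
  | .zero, _ => .zero
  | .single t, v => .single (.app t (.val v))
  | .add d₁ d₂, v => .add (appDV d₁ v) (appDV d₂ v)
  | .smul a d, v => .smul a (appDV d v)

def seqD : Distr → Distr → Distr
  | .zero, _ => .zero
  | .single t, s => .single (.seq t s)
  | .add d₁ d₂, s => .add (seqD d₁ s) (seqD d₂ s)
  | .smul a d, s => .smul a (seqD d s)

def letpD (x y : ℕ) : Distr → Distr → Distr
  | .zero, _ => .zero
  | .single t, s => .single (.letp x y t s)
  | .add d₁ d₂, s => .add (letpD x y d₁ s) (letpD x y d₂ s)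
  | .smul a d, s => .smul a (letpD x y d s)

def matcD : Distr → ℕ → Distr → ℕ → Distr → Distr
  | .zero, _, _, _, _ => .zero
  | .single t, y, s₁, z, s₂ => .single (.matc t y s₁ z s₂)
  | .add d₁ d₂, y, s₁, z, s₂ => .add (matcD d₁ y s₁ z s₂) (matcD d₂ y s₁ z s₂)
  | .smul a d, y, s₁, z, s₂ => .smul a (matcD d y s₁ z s₂)

/-- Bilinear application of distributions:  (Σᵢ αᵢ·tᵢ)(Σⱼ βⱼ·sⱼ) = Σᵢⱼ αᵢβⱼ·(tᵢ sⱼ). -/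
def appD : Distr → Distr → Distr
  | .zero, _ => .zero
  | .single t, w => appTD t w
  | .add d₁ d₂, w => .add (appD d₁ w) (appD d₂ w)
  | .smul a d, w => .smul a (appD d w)

/-- Bilinear substitution  d⟨x := w⃗⟩ = Σⱼ βⱼ · d[x := wⱼ]  (recursion on the value
distribution w⃗; non-value summands are junk and are sent to 0⃗). -/
def bsubst (x : ℕ) (d : Distr) : Distr → Distr
  | .zero => .zero
  | .single (.val w) => substD x w d
  | .single _ => .zero
  | .add w₁ w₂ => .add (bsubst x d w₁) (bsubst x d w₂)
  | .smul a w => .smul a (bsubst x d w)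

/-! ### Evaluation -/

inductive Atom : Term → Distr → Prop where
  | beta (x : ℕ) (b : Distr) (v : Val) :
      Atom (.app (.val (.lam x b)) (.val v)) (substD x v b)
  | seqStar (s : Distr) : Atom (.seq (.val .star) s) s
  | letPair (x y : ℕ) (v w : Val) (s : Distr) :
      Atom (.letp x y (.val (.pair v w)) s) (substD y w (substD x v s))
  | matchInl (v : Val) (y : ℕ) (s₁ : Distr) (z : ℕ) (s₂ : Distr) :
      Atom (.matc (.val (.inl v)) y s₁ z s₂) (substD y v s₁)
  | matchInr (v : Val) (y : ℕ) (s₁ : Distr) (z : ℕ) (s₂ : Distr) :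
      Atom (.matc (.val (.inr v)) y s₁ z s₂) (substD z v s₂)
  | appR (s : Term) {t : Term} {d : Distr} : Atom t d → Atom (.app s t) (appTD s d)
  | appL (v : Val) {t : Term} {d : Distr} : Atom t d → Atom (.app t (.val v)) (appDV d v)
  | seqC (s : Distr) {t : Term} {d : Distr} : Atom t d → Atom (.seq t s) (seqD d s)
  | letC (x y : ℕ) (s : Distr) {t : Term} {d : Distr} :
      Atom t d → Atom (.letp x y t s) (letpD x y d s)
  | matcC (y : ℕ) (s₁ : Distr) (z : ℕ) (s₂ : Distr) {t : Term} {d : Distr} :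
      Atom t d → Atom (.matc t y s₁ z s₂) (matcD d y s₁ z s₂)

/-- One-step evaluation:  t⃗ ≻ t⃗′. -/
def Step (d d' : Distr) : Prop :=
  ∃ (a : ℂ) (s : Term) (s' r : Distr),
    Cong d (Distr.add (.smul a (.single s)) r) ∧
    Cong d' (Distr.add (.smul a s') r) ∧ Atom s s'

/-- Evaluation  t⃗ ≻≻ t⃗′:  reflexive-transitive closure of one-step evaluation. -/
def Eval : Distr → Distr → Prop := Relation.ReflTransGen Step

/-! ### Value distributions, inner product, norm -/

def IsValT : Term → Prop
  | .val _ => True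
  | _ => False

def IsValD : Distr → Prop
  | .zero => True
  | .single t => IsValT t
  | .add d₁ d₂ => IsValD d₁ ∧ IsValD d₂
  | .smul _ d => IsValD d

/-- The set of closed value distributions. -/
def ClosedValD : Set Distr := {d | IsValD d ∧ fvD d = ∅}

/-- Total coefficient of the pure term `t` in the distribution `d`. -/
noncomputable def coeff : Distr → Term → ℂ
  | .zero, _ => 0
  | .single s, t => if s = t then 1 else 0
  | .add d₁ d₂, t => coeff d₁ t + coeff d₂ t
  | .smul a d, t => a * coeff d t

/-- The domain of a distribution (all pure terms occurring in it, even with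
coefficient 0). -/
noncomputable def domD : Distr → Finset Term
  | .zero => ∅
  | .single t => {t}
  | .add d₁ d₂ => domD d₁ ∪ domD d₂
  | .smul _ d => domD d

/-- The inner product ⟨v⃗|w⃗⟩ on value distributions. -/
noncomputable def innerD (v w : Distr) : ℂ :=
  ∑ t ∈ domD v, (starRingEnd ℂ) (coeff v t) * coeff w t

/-- The pseudo-ℓ²-norm ‖v⃗‖. -/
noncomputable def normD (v : Distr) : ℝ := Real.sqrt (innerD v v).re

/-- The unit sphere S of closed value distributions of norm 1. -/
def Sphere : Set Distr := {d | d ∈ ClosedValD ∧ normD d = 1}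

/-- Span(X): weak linear combinations of elements of X (taken modulo ≡). -/
inductive Span (X : Set Distr) : Distr → Prop where
  | mem {d : Distr} : d ∈ X → Span X d
  | zero : Span X .zero
  | add {d₁ d₂ : Distr} : Span X d₁ → Span X d₂ → Span X (d₁.add d₂)
  | smul (a : ℂ) {d : Distr} : Span X d → Span X (Distr.smul a d)
  | congr {d d' : Distr} : Span X d → Cong d d' → Span X d'

/-! ### Realizability: unitary types -/

/-- t⃗ ⊩ A :  t⃗ evaluates to some vector of ⟦A⟧. -/
def Realizes (A : Set Distr) (t : Distr) : Prop := ∃ v ∈ A, Eval t v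

/-- |A| : the set of (closed) realizers of A. -/
def realizersOf (A : Set Distr) : Set Distr := {t | fvD t = ∅ ∧ Realizes A t}

/-! ### Type constructors -/

def UnitT : Set Distr := {Distr.single (.val .star)}

/-- ♭A : the basis of A. -/
def flatT (X : Set Distr) : Set Distr :=
  {e | ∃ d ∈ X, ∃ v : Val, (Term.val v) ∈ domD d ∧ e = Distr.single (.val v)}

/-- ♯A : the unitary span of A. -/
def sharpT (X : Set Distr) : Set Distr := {d | Span X d ∧ d ∈ Sphere}

/-- Linear extension of a value constructor. -/
def mapVD (f : Val → Val) : Distr → Distr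
  | .zero => .zero
  | .single (.val v) => .single (.val (f v))
  | .single t => .single t
  | .add d₁ d₂ => .add (mapVD f d₁) (mapVD f d₂)
  | .smul a d => .smul a (mapVD f d)

def inlD : Distr → Distr := mapVD Val.inl
def inrD : Distr → Distr := mapVD Val.inr

/-- Bilinear extension of pairing. -/
def pairD : Distr → Distr → Distr
  | .zero, _ => .zero
  | .single (.val v), w => mapVD (Val.pair v) w
  | .single t, _ => .single t
  | .add d₁ d₂, w => .add (pairD d₁ w) (pairD d₂ w)
  | .smul a d, w => .smul a (pairD d w)

/-- A + B (simple sum). -/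
def plusT (A B : Set Distr) : Set Distr :=
  {d | (∃ v ∈ A, d = inlD v) ∨ (∃ w ∈ B, d = inrD w)}

/-- A × B (simple product). -/
def timesT (A B : Set Distr) : Set Distr :=
  {d | ∃ v ∈ A, ∃ w ∈ B, d = pairD v w}

/-- A → B (pure arrow). -/
def arrowT (A B : Set Distr) : Set Distr :=
  {d | ∃ (x : ℕ) (b : Distr), d = Distr.single (.val (.lam x b)) ∧ fvD d = ∅ ∧
      ∀ v ∈ A, Realizes B (bsubst x b v)}

/-- Σᵢ αᵢ · λx.t⃗ᵢ  ↦  Σᵢ αᵢ · t⃗ᵢ  (strips the λx in front of each summand). -/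
def stripLam (x : ℕ) : Distr → Distr
  | .zero => .zero
  | .single (.val (.lam y b)) => if y = x then b else .single (.val (.lam y b))
  | .single t => .single t
  | .add d₁ d₂ => .add (stripLam x d₁) (stripLam x d₂)
  | .smul a d => .smul a (stripLam x d)

/-- A ⇒ B (unitary arrow). -/
def uarrowT (A B : Set Distr) : Set Distr :=
  {d | d ∈ Sphere ∧ ∃ x : ℕ,
      (∀ t ∈ domD d, ∃ b : Distr, t = Term.val (.lam x b)) ∧
      ∀ v ∈ A, Realizes B (bsubst x (stripLam x d) v)}

/-! ### Booleans -/

def ttD : Distr := .single (.val (.inl .star))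
def ffD : Distr := .single (.val (.inr .star))

/-- 𝔹 = 𝕌 + 𝕌. -/
def BoolT : Set Distr := plusT UnitT UnitT

/-- ♯𝔹, the type of unitary Booleans. -/
def sharpBool : Set Distr := sharpT BoolT

/-- Boolean projection π : Span({tt,ff}) → ℂ². -/
noncomputable def piB (d : Distr) : ℂ × ℂ :=
  (coeff d (.val (.inl .star)), coeff d (.val (.inr .star)))

/-- t⃗ represents the operator F : ℂ² → ℂ². -/
def Represents (td : Distr) (F : ℂ × ℂ → ℂ × ℂ) : Prop :=
  ∀ v, Span BoolT v → ∃ w, Span BoolT w ∧ Eval (appD td v) w ∧ piB w = F (piB v)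

/-- Hermitian inner product on ℂ². -/
def hinner (u v : ℂ × ℂ) : ℂ :=
  (starRingEnd ℂ) u.1 * v.1 + (starRingEnd ℂ) u.2 * v.2

/-- A unitary operator on ℂ². -/
def IsUnitaryOp (F : ℂ × ℂ → ℂ × ℂ) : Prop :=
  ∀ u v : ℂ × ℂ, hinner (F u) (F v) = hinner u v

/-! ### Typing contexts, substitutions, judgments -/

abbrev Ctx := List (ℕ × Set Distr)
abbrev Subst := List (ℕ × Distr)

/-- Applying a substitution, one bilinear substitution at a time. -/
def applySub : Distr → Subst → Distr
  | d, [] => d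
  | d, (x, w) :: σ => applySub (bsubst x d w) σ

/-- σ ∈ ⟦Γ⟧. -/
def SubMem (σ : Subst) (Γ : Ctx) : Prop :=
  List.Forall₂ (fun p q => p.1 = q.1 ∧ p.2 ∈ q.2) σ Γ

def ctxDom (Γ : Ctx) : Set ℕ := {x | ∃ A, (x, A) ∈ Γ}

/-- dom♯(Γ): the variables of Γ whose type is not a pure-value type. -/
def ctxDomSharp (Γ : Ctx) : Set ℕ := {x | ∃ A, (x, A) ∈ Γ ∧ flatT A ≠ A}

/-- All the types of the context are unitary types (subsets of the sphere). -/
def CtxUnitary (Γ : Ctx) : Prop := ∀ p ∈ Γ, p.2 ⊆ Sphere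

/-- Validity of the typing judgment  Γ ⊢ t⃗ : A. -/
def ValidJ (Γ : Ctx) (t : Distr) (A : Set Distr) : Prop :=
  ctxDomSharp Γ ⊆ (fvD t : Set ℕ) ∧ (fvD t : Set ℕ) ⊆ ctxDom Γ ∧
  ∀ σ : Subst, SubMem σ Γ → Realizes A (applySub t σ)

/-- Validity of the orthogonality judgment  Γ | Δ₁ ⊢ t⃗₁ ⊥ Δ₂ ⊢ t⃗₂ : A. -/
def OrthoJ (Γ Δ₁ Δ₂ : Ctx) (t₁ t₂ : Distr) (A : Set Distr) : Prop :=
  ValidJ (Γ ++ Δ₁) t₁ A ∧ ValidJ (Γ ++ Δ₂) t₂ A ∧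
  ∀ σ σ₁ σ₂ : Subst, SubMem σ Γ → SubMem σ₁ Δ₁ → SubMem σ₂ Δ₂ →
    ∀ v₁ v₂ : Distr, v₁ ∈ ClosedValD → v₂ ∈ ClosedValD →
      Eval (applySub t₁ (σ ++ σ₁)) v₁ → Eval (applySub t₂ (σ ++ σ₂)) v₂ →
      innerD v₁ v₂ = 0

end LinAlg

namespace LinAlg

/-- A unitary type is pure when all its vectors are (congruent to) pure values. -/
def IsPureType (A : Set Distr) : Prop :=
  ∀ d ∈ A, ∃ v : Val, Cong d (Distr.single (.val v))

/-! ### Auxiliary lemmas -/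

/-- Coefficients are invariant under the congruence. -/
lemma congCoeff {d e : Distr} (h : Cong d e) : ∀ t, coeff d t = coeff e t := by
  induction h <;> intro t <;> simp_all [coeff] <;> ring

/-- The domain is invariant under the congruence. -/
lemma congDom {d e : Distr} (h : Cong d e) : domD d = domD e := by
  induction h <;> simp_all [domD, Finset.union_assoc, Finset.union_comm, Finset.union_left_comm]

/-- Linear maps preserve the congruence. -/
lemma cong_map {g : Distr → Distr}
    (h0 : g .zero = .zero)
    (h1 : ∀ a b, g (Distr.add a b) = Distr.add (g a) (g b))
    (h2 : ∀ (a : ℂ) d, g (Distr.smul a d) = Distr.smul a (g d)) :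
    ∀ {d e}, Cong d e → Cong (g d) (g e) := by
  intro d e h
  induction h with
  | addZero d => rw [h1, h0]; exact Cong.addZero _
  | oneSmul d => rw [h2]; exact Cong.oneSmul _
  | smulSmul a b d => rw [h2, h2, h2]; exact Cong.smulSmul _ _ _
  | addComm d₁ d₂ => rw [h1, h1]; exact Cong.addComm _ _
  | addAssoc d₁ d₂ d₃ => rw [h1, h1, h1, h1]; exact Cong.addAssoc _ _ _
  | smulDistrib a b d => rw [h2, h1, h2, h2]; exact Cong.smulDistrib _ _ _
  | smulAdd a d₁ d₂ => rw [h2, h1, h1, h2, h2]; exact Cong.smulAdd _ _ _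
  | refl d => exact Cong.refl _
  | symm _ ih => exact ih.symm
  | trans _ _ ih1 ih2 => exact ih1.trans ih2
  | addCongr _ _ ih1 ih2 => rw [h1, h1]; exact Cong.addCongr ih1 ih2
  | smulCongr a _ ih => rw [h2, h2]; exact Cong.smulCongr _ ih

lemma mapVD_cong (f : Val → Val) {d e : Distr} (h : Cong d e) :
    Cong (mapVD f d) (mapVD f e) :=
  cong_map (by simp [mapVD]) (fun a b => by simp [mapVD]) (fun a d => by simp [mapVD]) h

lemma pairD_congL (w : Distr) {d e : Distr} (h : Cong d e) :
    Cong (pairD d w) (pairD e w) :=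
  cong_map (g := fun d => pairD d w) (by simp [pairD]) (fun a b => by simp [pairD])
    (fun a d => by simp [pairD]) h

lemma cong_one_zero (X : Distr) : Cong (Distr.add (Distr.smul 1 X) .zero) X :=
  (Cong.addZero _).trans (Cong.oneSmul _)

/-- X + 0·(1·X) ≡ X. -/
lemma cong_merge (X : Distr) :
    Cong (Distr.add X (Distr.smul 0 (Distr.smul 1 X))) X := by
  have h1 : Cong (Distr.add X (Distr.smul 0 (Distr.smul 1 X)))
      (Distr.add (Distr.smul 1 X) (Distr.smul 0 X)) :=
    Cong.addCongr (Cong.oneSmul X).symm (Cong.smulCongr 0 (Cong.oneSmul X))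
  have h2 : Cong (Distr.add (Distr.smul 1 X) (Distr.smul 0 X)) (Distr.smul 1 X) := by
    have := (Cong.smulDistrib 1 0 X).symm
    simpa using this
  exact (h1.trans h2).trans (Cong.oneSmul X)

/-- Free variables of stripLam. -/
lemma fvD_strip (x : ℕ) : ∀ d : Distr, fvD (stripLam x d) ⊆ fvD d ∪ {x}
  | .zero => by simp [stripLam, fvD]
  | .single t => by
    cases t with
    | val v =>
      cases v with
      | lam y b =>
        by_cases h : y = x
        · subst h
          have hs : stripLam y (Distr.single (.val (.lam y b))) = b := by
            simp [stripLam]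
          rw [hs]
          intro a ha
          simp only [fvD, fvT, fvV, Finset.mem_union, Finset.mem_sdiff,
            Finset.mem_singleton]
          by_cases hay : a = y
          · exact Or.inr hay
          · exact Or.inl ⟨ha, hay⟩
        · simp [stripLam, h]
      | var y => simp [stripLam]
      | star => simp [stripLam]
      | pair v₁ v₂ => simp [stripLam]
      | inl v => simp [stripLam]
      | inr v => simp [stripLam]
    | app t1 t2 => simp [stripLam]
    | seq t s => simp [stripLam]
    | letp y z t s => simp [stripLam]
    | matc t y s₁ z s₂ => simp [stripLam]
  | .add d₁ d₂ => by
    simp only [stripLam, fvD]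
    intro a ha
    rcases Finset.mem_union.1 ha with h | h
    · rcases Finset.mem_union.1 (fvD_strip x d₁ h) with h' | h'
      · exact Finset.mem_union.2 (Or.inl (Finset.mem_union.2 (Or.inl h')))
      · exact Finset.mem_union.2 (Or.inr h')
    · rcases Finset.mem_union.1 (fvD_strip x d₂ h) with h' | h'
      · exact Finset.mem_union.2 (Or.inl (Finset.mem_union.2 (Or.inr h')))
      · exact Finset.mem_union.2 (Or.inr h')
  | .smul a d => by simpa [stripLam, fvD] using fvD_strip x d

/-- Does a distribution contain at least one `single`? -/
def HasS : Distr → Prop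
  | .zero => False
  | .single _ => True
  | .add d₁ d₂ => HasS d₁ ∨ HasS d₂
  | .smul _ d => HasS d

/-- bsubst over a single-free vector does not depend on the subject. -/
lemma bsubst_noS (x : ℕ) (D D' : Distr) :
    ∀ v : Distr, ¬ HasS v → bsubst x D v = bsubst x D' v
  | .zero, _ => rfl
  | .single t, h => absurd (by simp [HasS]) h
  | .add v₁ v₂, h => by
    simp only [bsubst]
    rw [bsubst_noS x D D' v₁ (fun hh => h (Or.inl hh)),
      bsubst_noS x D D' v₂ (fun hh => h (Or.inr hh))]
  | .smul a v, h => by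
    simp only [bsubst]
    rw [bsubst_noS x D D' v (by simpa [HasS] using h)]

/-- Congruence of bsubst in the subject. -/
lemma bsubst_cong (x : ℕ) {D D' : Distr}
    (h : ∀ w : Val, Cong (substD x w D) (substD x w D')) :
    ∀ v : Distr, Cong (bsubst x D v) (bsubst x D' v)
  | .zero => Cong.refl _
  | .single t => by
    cases t with
    | val w => simpa [bsubst] using h w
    | app t1 t2 => exact Cong.refl _
    | seq t s => exact Cong.refl _
    | letp y z t s => exact Cong.refl _
    | matc t y s₁ z s₂ => exact Cong.refl _
  | .add v₁ v₂ => Cong.addCongr (bsubst_cong x h v₁) (bsubst_cong x h v₂)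
  | .smul a v => Cong.smulCongr a (bsubst_cong x h v)

lemma cong_split (a : ℂ) (X Y r : Distr) :
    Cong (Distr.add (Distr.smul a (X.add Y)) r)
      (Distr.add (Distr.smul a X) (Distr.add (Distr.smul a Y) r)) :=
  (Cong.addCongr (Cong.smulAdd a X Y) (Cong.refl r)).trans (Cong.addAssoc _ _ _)

lemma cong_swap (X Y r : Distr) :
    Cong (X.add (Y.add r)) (Y.add (X.add r)) :=
  ((Cong.addAssoc X Y r).symm.trans
    (Cong.addCongr (Cong.addComm X Y) (Cong.refl r))).trans (Cong.addAssoc Y X r)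

/-- Key evaluation lemma: a distribution congruent to a linear-context instance of
`bsubst x (⋆;u) v` evaluates to anything congruent to the same context instance
of `bsubst x u v`, provided v has at least one summand. -/
theorem stepK (x : ℕ) (u : Distr) :
    ∀ v : Distr, IsValD v → HasS v → ∀ (a : ℂ) (r g t' : Distr),
      Cong g ((Distr.smul a
        (bsubst x (Distr.single (.seq (.val .star) u)) v)).add r) →
      Cong t' ((Distr.smul a (bsubst x u v)).add r) →
      Eval g t'
  | .zero, _, hS, _, _, _, _, _, _ => absurd hS (by simp [HasS])
  | .single t, hV, _, a, r, g, t', hg, ht' => by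
    cases t with
    | val w =>
      have hb : bsubst x (Distr.single (.seq (.val .star) u)) (.single (.val w))
          = Distr.single (.seq (.val .star) (substD x w u)) := by
        simp [bsubst, substD, substT, substV]
      have hb2 : bsubst x u (Distr.single (.val w)) = substD x w u := by
        simp [bsubst]
      rw [hb] at hg
      rw [hb2] at ht'
      exact Relation.ReflTransGen.single
        ⟨a, .seq (.val .star) (substD x w u), substD x w u, r, hg, ht', Atom.seqStar _⟩
    | app t1 t2 => exact absurd hV (by simp [IsValD, IsValT])
    | seq t s => exact absurd hV (by simp [IsValD, IsValT])
    | letp y z t s => exact absurd hV (by simp [IsValD, IsValT])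
    | matc t y s₁ z s₂ => exact absurd hV (by simp [IsValD, IsValT])
  | .smul b v₁, hV, hS, a, r, g, t', hg, ht' => by
    have hV₁ : IsValD v₁ := by simpa [IsValD] using hV
    have hS₁ : HasS v₁ := by simpa [HasS] using hS
    simp only [bsubst] at hg ht'
    exact stepK x u v₁ hV₁ hS₁ (a * b) r g t'
      (hg.trans (Cong.addCongr (Cong.smulSmul a b _) (Cong.refl r)))
      (ht'.trans (Cong.addCongr (Cong.smulSmul a b _) (Cong.refl r)))
  | .add v₁ v₂, hV, hS, a, r, g, t', hg, ht' => by
    have hV' : IsValD v₁ ∧ IsValD v₂ := by simpa [IsValD] using hV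
    have hS' : HasS v₁ ∨ HasS v₂ := by simpa [HasS] using hS
    simp only [bsubst] at hg ht'
    set S : Distr := Distr.single (.seq (.val .star) u) with hSdef
    set B₁ := bsubst x S v₁
    set B₂ := bsubst x S v₂
    set T₁ := bsubst x u v₁
    set T₂ := bsubst x u v₂
    by_cases h1 : HasS v₁
    · by_cases h2 : HasS v₂
      · -- two phases
        have hg' : Cong g ((Distr.smul a B₁).add ((Distr.smul a B₂).add r)) :=
          hg.trans (cong_split a B₁ B₂ r)
        set mid : Distr := (Distr.smul a T₁).add ((Distr.smul a B₂).add r) with hmid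
        have e1 : Eval g mid :=
          stepK x u v₁ hV'.1 h1 a ((Distr.smul a B₂).add r) g mid hg' (Cong.refl _)
        have hmidc : Cong mid ((Distr.smul a B₂).add ((Distr.smul a T₁).add r)) :=
          cong_swap _ _ _
        have ht'' : Cong t' ((Distr.smul a T₂).add ((Distr.smul a T₁).add r)) :=
          (ht'.trans (cong_split a T₁ T₂ r)).trans (cong_swap _ _ _)
        have e2 : Eval mid t' :=
          stepK x u v₂ hV'.2 h2 a ((Distr.smul a T₁).add r) mid t' hmidc ht''
        exact e1.trans e2
      · have hB2 : B₂ = T₂ := bsubst_noS x S u v₂ h2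
        have hg' : Cong g ((Distr.smul a B₁).add ((Distr.smul a T₂).add r)) := by
          rw [← hB2]; exact hg.trans (cong_split a B₁ B₂ r)
        have ht'' : Cong t' ((Distr.smul a T₁).add ((Distr.smul a T₂).add r)) :=
          ht'.trans (cong_split a T₁ T₂ r)
        exact stepK x u v₁ hV'.1 h1 a ((Distr.smul a T₂).add r) g t' hg' ht''
    · have h2 : HasS v₂ := hS'.resolve_left h1
      have hB1 : B₁ = T₁ := bsubst_noS x S u v₁ h1
      have hg' : Cong g ((Distr.smul a B₂).add ((Distr.smul a T₁).add r)) := by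
        rw [← hB1]
        exact (hg.trans (cong_split a B₁ B₂ r)).trans (cong_swap _ _ _)
      have ht'' : Cong t' ((Distr.smul a T₂).add ((Distr.smul a T₁).add r)) :=
        (ht'.trans (cong_split a T₁ T₂ r)).trans (cong_swap _ _ _)
      exact stepK x u v₂ hV'.2 h2 a ((Distr.smul a T₁).add r) g t' hg' ht''

lemma norm_pair (t₁ t₂ : Term) (h : t₁ ≠ t₂) :
    normD (Distr.add (Distr.single t₁) (Distr.smul 0 (Distr.single t₂))) = 1 := by
  unfold normD innerD
  have hdom : domD (Distr.add (Distr.single t₁) (Distr.smul 0 (Distr.single t₂)))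
      = {t₁, t₂} := by
    simp only [domD]
    exact (Finset.insert_eq t₁ {t₂}).symm
  rw [hdom, Finset.sum_pair h]
  simp [coeff, h, Ne.symm h]

/-- Pure types: 𝕌, ♭A and A→B are pure; sums and products of
pure types are pure; ♯A and A⇒B are not pure unless they are empty. -/
theorem pure_types (A B : Set Distr) (hA : A ⊆ Sphere) (hB : B ⊆ Sphere) :
    (IsPureType UnitT ∧ IsPureType (flatT A) ∧ IsPureType (arrowT A B)) ∧
    (IsPureType A → IsPureType B →
      IsPureType (plusT A B) ∧ IsPureType (timesT A B)) ∧
    ((sharpT A).Nonempty → ¬ IsPureType (sharpT A)) ∧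
    ((uarrowT A B).Nonempty → ¬ IsPureType (uarrowT A B)) := by
  refine ⟨⟨?_, ?_, ?_⟩, fun hPA hPB => ⟨?_, ?_⟩, ?_, ?_⟩
  · -- 𝕌 is pure
    intro d hd
    simp only [UnitT, Set.mem_singleton_iff] at hd
    exact ⟨.star, hd ▸ Cong.refl _⟩
  · -- ♭A is pure
    intro d hd
    obtain ⟨e, _, v, _, rfl⟩ := hd
    exact ⟨v, Cong.refl _⟩
  · -- A→B is pure
    intro d hd
    obtain ⟨x, b, rfl, -, -⟩ := hd
    exact ⟨.lam x b, Cong.refl _⟩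
  · -- A+B is pure
    intro d hd
    obtain ⟨v, hv, rfl⟩ | ⟨w, hw, rfl⟩ := hd
    · obtain ⟨u, hu⟩ := hPA v hv
      exact ⟨.inl u, by simpa [inlD, mapVD] using mapVD_cong Val.inl hu⟩
    · obtain ⟨u, hu⟩ := hPB w hw
      exact ⟨.inr u, by simpa [inrD, mapVD] using mapVD_cong Val.inr hu⟩
  · -- A×B is pure
    intro d hd
    obtain ⟨v, hv, w, hw, rfl⟩ := hd
    obtain ⟨a₀, ha₀⟩ := hPA v hv
    obtain ⟨b₀, hb₀⟩ := hPB w hw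
    refine ⟨.pair a₀ b₀, ?_⟩
    have h1 : Cong (pairD v w) (pairD (Distr.single (.val a₀)) w) := pairD_congL w ha₀
    have h2 : Cong (pairD (Distr.single (.val a₀)) w)
        (Distr.single (.val (.pair a₀ b₀))) := by
      simpa [pairD, mapVD] using mapVD_cong (Val.pair a₀) hb₀
    exact h1.trans h2
  · -- ♯A is not pure
    rintro ⟨d, hd⟩ hp
    obtain ⟨hSpan, hSph⟩ := hd
    have hval : IsValD d := hSph.1.1
    have hfv : fvD d = ∅ := hSph.1.2
    have hnorm : normD d = 1 := hSph.2
    have hinner : innerD (Distr.smul Complex.I d) (Distr.smul Complex.I d)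
        = innerD d d := by
      unfold innerD
      have hdm : domD (Distr.smul Complex.I d) = domD d := by simp [domD]
      rw [hdm]
      refine Finset.sum_congr rfl fun t _ => ?_
      have hc : coeff (Distr.smul Complex.I d) t = Complex.I * coeff d t := by
        simp [coeff]
      rw [hc, map_mul, Complex.conj_I]
      linear_combination (-((starRingEnd ℂ) (coeff d t) * coeff d t)) * Complex.I_sq
    have hd' : Distr.smul Complex.I d ∈ sharpT A := by
      refine ⟨Span.smul _ hSpan, ⟨⟨?_, ?_⟩, ?_⟩⟩
      · simpa [IsValD] using hval
      · simpa [fvD] using hfv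
      · unfold normD at hnorm ⊢
        rw [hinner]; exact hnorm
    obtain ⟨u, hu⟩ := hp d ⟨hSpan, hSph⟩
    obtain ⟨v₀, hv₀⟩ := hp _ hd'
    have h1 := congCoeff hv₀ (Term.val v₀)
    have h2 := congCoeff hu (Term.val v₀)
    simp only [coeff, if_pos rfl] at h1
    rw [h2] at h1
    simp only [coeff] at h1
    by_cases he : Term.val u = Term.val v₀
    · rw [if_pos he] at h1
      rw [mul_one] at h1
      have hI : (Complex.I : ℂ) ≠ 1 := by
        intro hc; simpa using congrArg Complex.im hc
      exact hI h1
    · rw [if_neg he] at h1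
      rw [mul_zero] at h1
      exact zero_ne_one h1
  · -- A⇒B is not pure
    rintro ⟨d, hd⟩ hp
    obtain ⟨hSph, x, hdom, hreal⟩ := hd
    have hfvd : fvD d = ∅ := hSph.1.2
    have hfb : fvD (stripLam x d) ⊆ {x} := by
      have := fvD_strip x d
      rw [hfvd] at this; simpa using this
    have hLneq : Val.lam x (Distr.single (Term.seq (Term.val .star) (stripLam x d)))
        ≠ Val.lam x (Distr.smul 1
            (Distr.single (Term.seq (Term.val .star) (stripLam x d)))) := by
      intro h
      injection h with h1 h2
      exact Distr.noConfusion h2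
    have hTneq : Term.val (Val.lam x
          (Distr.single (Term.seq (Term.val .star) (stripLam x d))))
        ≠ Term.val (Val.lam x (Distr.smul 1
            (Distr.single (Term.seq (Term.val .star) (stripLam x d))))) := by
      intro h; injection h with h1; exact hLneq h1
    set d2 : Distr := Distr.add
        (Distr.single (.val (.lam x
          (Distr.single (Term.seq (Term.val .star) (stripLam x d))))))
        (Distr.smul 0 (Distr.single (.val (.lam x (Distr.smul 1
          (Distr.single (Term.seq (Term.val .star) (stripLam x d)))))))) with hd2
    have hmem : d2 ∈ uarrowT A B := by
      refine ⟨⟨⟨?_, ?_⟩, ?_⟩, x, ?_, ?_⟩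
      · simp [hd2, IsValD, IsValT]
      · have hb0 : fvD (stripLam x d) \ ({x} : Finset ℕ) = ∅ :=
          Finset.sdiff_eq_empty_iff_subset.2 hfb
        simp [hd2, fvD, fvT, fvV, hb0]
      · exact norm_pair _ _ hTneq
      · intro t ht
        simp only [hd2, domD, Finset.mem_union, Finset.mem_singleton] at ht
        rcases ht with rfl | rfl
        · exact ⟨_, rfl⟩
        · exact ⟨_, rfl⟩
      · intro v hv
        obtain ⟨w, hwB, hEval⟩ := hreal v hv
        have hstrip : stripLam x d2 = Distr.add
            (Distr.single (Term.seq (Term.val .star) (stripLam x d)))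
            (Distr.smul 0 (Distr.smul 1
              (Distr.single (Term.seq (Term.val .star) (stripLam x d))))) := by
          simp [hd2, stripLam]
        rw [hstrip]
        by_cases hS : HasS v
        · have hvval : IsValD v := (hA hv).1.1
          have hcong : Cong
              (bsubst x (Distr.add
                (Distr.single (Term.seq (Term.val .star) (stripLam x d)))
                (Distr.smul 0 (Distr.smul 1
                  (Distr.single (Term.seq (Term.val .star) (stripLam x d)))))) v)
              (bsubst x (Distr.single (Term.seq (Term.val .star) (stripLam x d))) v) := by
            refine bsubst_cong x (fun w' => ?_) v
            simp only [substD, substT, substV]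
            exact cong_merge _
          have hg : Cong
              (bsubst x (Distr.add
                (Distr.single (Term.seq (Term.val .star) (stripLam x d)))
                (Distr.smul 0 (Distr.smul 1
                  (Distr.single (Term.seq (Term.val .star) (stripLam x d)))))) v)
              ((Distr.smul 1 (bsubst x
                (Distr.single (Term.seq (Term.val .star) (stripLam x d))) v)).add .zero) :=
            hcong.trans (cong_one_zero _).symm
          have ht' : Cong (bsubst x (stripLam x d) v)
              ((Distr.smul 1 (bsubst x (stripLam x d) v)).add .zero) :=
            (cong_one_zero _).symm
          have he := stepK x (stripLam x d) v hvval hS 1 .zero _ _ hg ht'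
          exact ⟨w, hwB, he.trans hEval⟩
        · rw [bsubst_noS x _ (stripLam x d) v hS]
          exact ⟨w, hwB, hEval⟩
    obtain ⟨v₀, hv₀⟩ := hp d2 hmem
    have hdomeq := congDom hv₀
    have m1 : Term.val (Val.lam x
          (Distr.single (Term.seq (Term.val .star) (stripLam x d))))
        ∈ domD (Distr.single (Term.val v₀)) := by
      rw [← hdomeq]; simp [hd2, domD]
    have m2 : Term.val (Val.lam x (Distr.smul 1
          (Distr.single (Term.seq (Term.val .star) (stripLam x d)))))
        ∈ domD (Distr.single (Term.val v₀)) := by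
      rw [← hdomeq]; simp [hd2, domD]
    simp only [domD, Finset.mem_singleton] at m1 m2
    exact hTneq (m1.trans m2.symm)

end LinAlg
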